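/- Let β ≥ 1 and t ∈ (0,1), and let f : (0,1/2] → ℝ be a measurable function satisfying f(r) ≤ β/t for all r ∈ (0, e^{−β/t}] and f(r) ≤ −ln( r·(−ln r) ) + (1/2)ln 3 for all r ∈ (0,1/2]. Then ∫₀^{1/2} e^{f(r)} dr ≤ 1 + √3·( ln(β/t) − ln(ln 2) ). Consequently, for all sufficiently small t > 0 (depending only on β), ∫₀^{1/2} e^{f(r)} dr ≤ −2 ln t. -/

import Mathlib

open Set MeasureTheory


lemma ftc (a : ℝ) (ha : 0 < a) (hab : a ≤ 1/2) :
    ∫ r in a..(1/2), 1/(r * (-Real.log r)) =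
      Real.log (-Real.log a) - Real.log (Real.log 2) := by
  have key : ∀ x ∈ uIcc a (1/2:ℝ), HasDerivAt (fun r => -Real.log (-Real.log r))
      (1/(x * (-Real.log x))) x := by
    intro x hx
    rw [uIcc_of_le hab] at hx
    have hx0 : 0 < x := lt_of_lt_of_le ha hx.1
    have hlx : Real.log x < 0 := Real.log_neg hx0 (lt_of_le_of_lt hx.2 (by norm_num))
    have h1 : HasDerivAt (fun r : ℝ => -Real.log r) (-x⁻¹) x :=
      (Real.hasDerivAt_log hx0.ne').neg
    have h2 : HasDerivAt Real.log (-Real.log x)⁻¹ (-Real.log x) :=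
      Real.hasDerivAt_log (by linarith)
    have := (h2.comp x h1).neg
    refine this.congr_deriv ?_
    field_simp
  rw [intervalIntegral.integral_eq_sub_of_hasDerivAt key ?_]
  · rw [show Real.log (1/2 : ℝ) = -Real.log 2 by rw [one_div, Real.log_inv]]
    ring
  · apply ContinuousOn.intervalIntegrable
    rw [uIcc_of_le hab]
    apply ContinuousOn.div continuousOn_const
    · exact continuousOn_id.mul
        ((Real.continuousOn_log.mono (fun x hx => by
          have : (0:ℝ) < x := lt_of_lt_of_le ha hx.1
          simpa using this.ne')).neg)
    · intro x hx
      have hx0 : 0 < x := lt_of_lt_of_le ha hx.1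
      have hlx : Real.log x < 0 := Real.log_neg hx0 (lt_of_le_of_lt hx.2 (by norm_num))
      have : 0 < x * -Real.log x := mul_pos hx0 (by linarith)
      exact this.ne' 

lemma cont' (a : ℝ) (ha : 0 < a) :
    ContinuousOn (fun r => Real.sqrt 3 * (1/(r * (-Real.log r)))) (Icc a (1/2)) := by
  apply ContinuousOn.mul continuousOn_const
  apply ContinuousOn.div continuousOn_const
  · exact continuousOn_id.mul
      ((Real.continuousOn_log.mono (fun x hx => by
        have : (0:ℝ) < x := lt_of_lt_of_le ha hx.1
        simpa using this.ne')).neg)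
  · intro x hx
    have hx0 : 0 < x := lt_of_lt_of_le ha hx.1
    have hlx : Real.log x < 0 := Real.log_neg hx0 (lt_of_le_of_lt hx.2 (by norm_num))
    have : 0 < x * -Real.log x := mul_pos hx0 (by linarith)
    exact this.ne' 

lemma core (β t : ℝ) (hβ : 1 ≤ β) (ht0 : 0 < t) (ht1 : t < 1) (f : ℝ → ℝ)
    (hf : Measurable f)
    (h1 : ∀ r ∈ Ioc (0:ℝ) (Real.exp (-β/t)), f r ≤ β/t)
    (h2 : ∀ r ∈ Ioc (0:ℝ) (1/2), f r ≤ -Real.log (r * (-Real.log r)) + (1/2) * Real.log 3) :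
    ∫⁻ r in Ioc (0:ℝ) (1/2), ENNReal.ofReal (Real.exp (f r)) ≤
      ENNReal.ofReal (1 + Real.sqrt 3 * (Real.log (β/t) - Real.log (Real.log 2))) := by
  set a := Real.exp (-β/t) with ha_def
  have ha0 : 0 < a := Real.exp_pos _
  have hβt : 1 ≤ β/t := by
    rw [le_div_iff₀ ht0]; nlinarith
  have hlog2 : Real.log 2 < 1 := by
    have := Real.log_two_lt_d9; linarith
  have hab : a ≤ 1/2 := by
    have h1' : a ≤ Real.exp (-1) := by
      apply Real.exp_le_exp.2; rw [neg_div]; linarith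
    have h2' : Real.exp (-1) < 1/2 := by
      rw [Real.exp_neg]
      rw [inv_lt_comm₀ (Real.exp_pos 1) (by norm_num)]
      have := Real.exp_one_gt_d9; norm_num; linarith
    linarith
  set g : ℝ → ℝ := fun r => Real.sqrt 3 * (1/(r * (-Real.log r))) with hg_def
  have hgmeas : Measurable g :=
    measurable_const.mul (measurable_const.div (measurable_id.mul Real.measurable_log.neg))
  -- split
  have hsplit : Ioc (0:ℝ) (1/2) = Ioc 0 a ∪ Ioc a (1/2) :=
    (Ioc_union_Ioc_eq_Ioc ha0.le hab).symm
  rw [hsplit]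
  calc ∫⁻ r in Ioc (0:ℝ) a ∪ Ioc a (1/2), ENNReal.ofReal (Real.exp (f r))
      ≤ (∫⁻ r in Ioc (0:ℝ) a, ENNReal.ofReal (Real.exp (f r))) +
        ∫⁻ r in Ioc a (1/2), ENNReal.ofReal (Real.exp (f r)) := lintegral_union_le _ _ _
    _ ≤ ENNReal.ofReal 1 +
        ENNReal.ofReal (Real.sqrt 3 * (Real.log (β/t) - Real.log (Real.log 2))) := by
        gcongr
        · -- piece 1
          calc ∫⁻ r in Ioc (0:ℝ) a, ENNReal.ofReal (Real.exp (f r))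
              ≤ ∫⁻ _ in Ioc (0:ℝ) a, ENNReal.ofReal (Real.exp (β/t)) := by
                apply setLIntegral_mono measurable_const
                intro r hr
                exact ENNReal.ofReal_le_ofReal (Real.exp_le_exp.2 (h1 r hr))
            _ = ENNReal.ofReal (Real.exp (β/t)) * ENNReal.ofReal a := by
                rw [setLIntegral_const, Real.volume_Ioc]; norm_num
            _ = ENNReal.ofReal 1 := by
                rw [← ENNReal.ofReal_mul (Real.exp_pos _).le, ha_def,
                  ← Real.exp_add, show β/t + -β/t = 0 by ring, Real.exp_zero]
        · -- piece 2
          calc ∫⁻ r in Ioc a (1/2), ENNReal.ofReal (Real.exp (f r))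
              ≤ ∫⁻ r in Ioc a (1/2), ENNReal.ofReal (g r) := by
                apply setLIntegral_mono hgmeas.ennreal_ofReal
                intro r hr
                apply ENNReal.ofReal_le_ofReal
                have hr0 : 0 < r := lt_of_lt_of_le ha0 hr.1.le
                have hlr : Real.log r < 0 := Real.log_neg hr0 (lt_of_le_of_lt hr.2 (by norm_num))
                have hx : 0 < r * (-Real.log r) := mul_pos hr0 (by linarith)
                calc Real.exp (f r)
                    ≤ Real.exp (-Real.log (r * (-Real.log r)) + (1/2) * Real.log 3) :=
                      Real.exp_le_exp.2 (h2 r ⟨hr0, hr.2⟩)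
                  _ = g r := by
                      rw [Real.exp_add, Real.exp_neg, Real.exp_log hx, hg_def]
                      have : Real.exp ((1/2) * Real.log 3) = Real.sqrt 3 := by
                        rw [Real.sqrt_eq_rpow, Real.rpow_def_of_pos (by norm_num : (0:ℝ) < 3)]
                        ring_nf
                      rw [this]; ring
            _ = ENNReal.ofReal (∫ r in Ioc a (1/2), g r) := by
                rw [ofReal_integral_eq_lintegral_ofReal]
                · exact ((cont' a ha0).integrableOn_Icc).mono_set Ioc_subset_Icc_self
                · rw [Filter.EventuallyLE, ae_restrict_iff' measurableSet_Ioc]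
                  apply ae_of_all
                  intro r hr
                  have hr0 : 0 < r := lt_of_lt_of_le ha0 hr.1.le
                  have hlr : Real.log r < 0 := Real.log_neg hr0 (lt_of_le_of_lt hr.2 (by norm_num))
                  have hx : 0 < r * (-Real.log r) := mul_pos hr0 (by linarith)
                  simp only [Pi.zero_apply, hg_def]
                  positivity
            _ = ENNReal.ofReal (Real.sqrt 3 * (Real.log (β/t) - Real.log (Real.log 2))) := by
                congr 1
                rw [← intervalIntegral.integral_of_le hab, intervalIntegral.integral_const_mul,
                  ftc a ha0 hab, ha_def, Real.log_exp]
                rw [neg_div, neg_neg]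
    _ = ENNReal.ofReal (1 + Real.sqrt 3 * (Real.log (β/t) - Real.log (Real.log 2))) := by
        rw [ENNReal.ofReal_add (by norm_num)]
        apply mul_nonneg (Real.sqrt_nonneg 3)
        have h3 : 0 ≤ Real.log (β/t) := Real.log_nonneg hβt
        have h4 : Real.log (Real.log 2) < 0 :=
          Real.log_neg (Real.log_pos one_lt_two) hlog2
        linarith

theorem stmt16 (β : ℝ) (hβ : 1 ≤ β) :
    (∀ t ∈ Ioo (0:ℝ) 1, ∀ f : ℝ → ℝ, Measurable f →
      (∀ r ∈ Ioc (0:ℝ) (Real.exp (-β/t)), f r ≤ β/t) →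
      (∀ r ∈ Ioc (0:ℝ) (1/2), f r ≤ -Real.log (r * (-Real.log r)) + (1/2) * Real.log 3) →
      ∫⁻ r in Ioc (0:ℝ) (1/2), ENNReal.ofReal (Real.exp (f r)) ≤
        ENNReal.ofReal (1 + Real.sqrt 3 * (Real.log (β/t) - Real.log (Real.log 2)))) ∧
    ∃ t₁ : ℝ, 0 < t₁ ∧ ∀ t ∈ Ioo (0:ℝ) t₁, ∀ f : ℝ → ℝ, Measurable f →
      (∀ r ∈ Ioc (0:ℝ) (Real.exp (-β/t)), f r ≤ β/t) →
      (∀ r ∈ Ioc (0:ℝ) (1/2), f r ≤ -Real.log (r * (-Real.log r)) + (1/2) * Real.log 3) →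
      ∫⁻ r in Ioc (0:ℝ) (1/2), ENNReal.ofReal (Real.exp (f r)) ≤
        ENNReal.ofReal (-2 * Real.log t) := by
  constructor
  · intro t ht f hf h1 h2
    exact core β t hβ ht.1 ht.2 f hf h1 h2
  · set K : ℝ := 1 + Real.sqrt 3 * (Real.log β - Real.log (Real.log 2)) with hK
    have hs3 : Real.sqrt 3 < 2 := by
      rw [show (2:ℝ) = Real.sqrt 4 by rw [show (4:ℝ) = 2^2 by norm_num, Real.sqrt_sq]; norm_num]
      exact Real.sqrt_lt_sqrt (by norm_num) (by norm_num)
    refine ⟨min 1 (Real.exp (-K/(2 - Real.sqrt 3))), lt_min one_pos (Real.exp_pos _), ?_⟩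
    intro t ht f hf h1 h2
    have ht0 : 0 < t := ht.1
    have ht1 : t < 1 := lt_of_lt_of_le ht.2 (min_le_left _ _)
    have hcore := core β t hβ ht0 ht1 f hf h1 h2
    refine hcore.trans (ENNReal.ofReal_le_ofReal ?_)
    have hlt : Real.log t < -K/(2 - Real.sqrt 3) := by
      have := lt_of_lt_of_le ht.2 (min_le_right _ _)
      calc Real.log t < Real.log (Real.exp (-K/(2 - Real.sqrt 3))) :=
            Real.log_lt_log ht0 this
        _ = -K/(2 - Real.sqrt 3) := Real.log_exp _
    have hlog : Real.log (β/t) = Real.log β - Real.log t :=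
      Real.log_div (by linarith) ht0.ne'
    rw [hlog]
    have h23 : 0 < 2 - Real.sqrt 3 := by linarith
    rw [lt_div_iff₀ h23, hK] at hlt
    nlinarith [Real.sqrt_nonneg 3, hlt]
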